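/- arXiv:2507.20931 — 2 statements merged into one kernel-verified Lean document; each statement's English description precedes it below -/
import Mathlib

section
/- Let R be a von Neumann algebra on a Hilbert space H in standard form with cyclic and separating vector ξ, and let T be a positive self-adjoint non-singular operator affiliated with R with ξ ∈ D(T). Then Tξ is a cyclic vector for R, i.e., the closure of {A(Tξ) : A ∈ R} equals H. -/
open scoped ComplexOrder

noncomputable section

/-- A (possibly unbounded) operator `T` is affiliated with the von Neumann algebra `R` if
`U T ⊆ T U` for every unitary `U` in the commutant `R'`. -/
def Affiliated {H : Type*} [NormedAddCommGroup H] [InnerProductSpace ℂ H] [CompleteSpace H]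
    (R : VonNeumannAlgebra H) (T : H →ₗ.[ℂ] H) : Prop :=
  ∀ U : H →L[ℂ] H, U ∈ unitary (H →L[ℂ] H) → U ∈ R.commutant →
    ∀ x : T.domain, ∃ h : U (x : H) ∈ T.domain, T ⟨U (x : H), h⟩ = U (T x)

/-- Let `R` be a von Neumann algebra in standard form with cyclic and
separating vector `ξ`, and let `T` be a positive self-adjoint non-singular operator
affiliated with `R` with `ξ ∈ D(T)`. Then `Tξ` is a cyclic vector for `R`, i.e. the closure
of `{A (Tξ) : A ∈ R}` is all of `H`. -/
theorem cyclic_of_positive_nonsingular_affiliated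
    {H : Type*} [NormedAddCommGroup H] [InnerProductSpace ℂ H] [CompleteSpace H]
    (R : VonNeumannAlgebra H) (ξ : H)
    (hcyc : Dense {y : H | ∃ A ∈ R, A ξ = y})
    (hsep : ∀ A ∈ R, A ξ = 0 → A = 0)
    (T : H →ₗ.[ℂ] H) (hsa : IsSelfAdjoint T)
    (hpos : ∀ x : T.domain, 0 ≤ (inner ℂ (x : H) (T x) : ℂ))
    (hinj : ∀ x : T.domain, T x = 0 → (x : H) = 0)
    (haff : Affiliated R T) (hξ : ξ ∈ T.domain) :
    Dense {y : H | ∃ A ∈ R, A (T ⟨ξ, hξ⟩) = y} := by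
  classical
  set η : H := T ⟨ξ, hξ⟩ with hη
  -- the submodule of vectors A η
  let K₀ : Submodule ℂ H :=
    { carrier := {y : H | ∃ A ∈ R, A η = y}
      add_mem' := by
        rintro a b ⟨A, hA, rfl⟩ ⟨B, hB, rfl⟩
        exact ⟨A + B, add_mem hA hB, rfl⟩
      zero_mem' := ⟨0, zero_mem R.toStarSubalgebra, rfl⟩
      smul_mem' := by
        rintro c a ⟨A, hA, rfl⟩
        exact ⟨c • A, R.toStarSubalgebra.smul_mem hA c, rfl⟩ }
  let K : Submodule ℂ H := K₀.topologicalClosure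
  have hKclosed : IsClosed (K : Set H) := K₀.isClosed_topologicalClosure
  haveI : CompleteSpace K := hKclosed.completeSpace_coe
  -- K is invariant under every A ∈ R
  have hmapK : ∀ A ∈ R, ∀ v ∈ K, A v ∈ K := by
    intro A hA v hv
    have h0 : Set.MapsTo A (K₀ : Set H) (K₀ : Set H) := by
      rintro y ⟨B, hB, rfl⟩
      exact ⟨A * B, mul_mem hA hB, rfl⟩
    have : A v ∈ closure (K₀ : Set H) :=
      map_mem_closure A.continuous (by exact hv) h0
    exact this
  -- the orthogonal projection onto K
  let P : H →L[ℂ] H := K.subtypeL ∘L K.orthogonalProjectionOnto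
  have hPmem : ∀ x : H, P x ∈ K := fun x => SetLike.coe_mem _
  have hPid : ∀ v ∈ K, P v = v := fun v hv => Submodule.starProjection_eq_self_iff.mpr hv
  have hPperp : ∀ v ∈ Kᗮ, P v = 0 := by
    intro v hv
    have : K.orthogonalProjectionOnto v = 0 :=
      Submodule.orthogonalProjectionOnto_apply_of_mem_orthogonal hv
    simp [P, this]
  -- P commutes with every A ∈ R
  have hcomm : ∀ A ∈ R, ∀ x : H, P (A x) = A (P x) := by
    intro A hA x
    have hx : A x = A (P x) + A (x - P x) := by rw [← map_add]; congr 1; abel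
    have h1 : A (P x) ∈ K := hmapK A hA _ (hPmem x)
    have h2 : A (x - P x) ∈ Kᗮ := by
      rw [Submodule.mem_orthogonal]
      intro u hu
      have hadj : (inner ℂ u (A (x - P x)) : ℂ) =
          inner ℂ ((ContinuousLinearMap.adjoint A) u) (x - P x) := by
        rw [ContinuousLinearMap.adjoint_inner_left]
      rw [hadj]
      have hsA : (ContinuousLinearMap.adjoint A) u ∈ K := by
        have : star A ∈ R := star_mem hA
        rw [ContinuousLinearMap.star_eq_adjoint] at this
        exact hmapK _ this u hu
      have hmem : x - P x ∈ Kᗮ := K.sub_starProjection_mem_orthogonal x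
      exact (Submodule.mem_orthogonal K _).mp hmem _ hsA
    rw [hx, map_add, hPid _ h1, hPperp _ h2, add_zero]
  -- the symmetry U = 2P - 1
  let U : H →L[ℂ] H := P + P - 1
  have hUapp : ∀ x, U x = P x + P x - x := fun x => rfl
  have hUU : ∀ x, U (U x) = x := by
    intro x
    have hPP : ∀ y, P (P y) = P y := fun y => hPid _ (hPmem y)
    rw [hUapp, hUapp]
    simp only [map_sub, map_add, hPP]
    abel
  have hUstar : star U = U := by
    have hP : star P = P := isSelfAdjoint_starProjection K
    simp [U, star_sub, star_add, hP]
  have hUunit : U ∈ unitary (H →L[ℂ] H) := by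
    rw [Unitary.mem_iff, hUstar]
    constructor <;> · ext x; exact hUU x
  have hUcomm : U ∈ R.commutant := by
    rw [VonNeumannAlgebra.mem_commutant_iff]
    intro A hA
    ext x
    simp only [ContinuousLinearMap.mul_apply, hUapp, map_sub, map_add,
      ContinuousLinearMap.one_apply]
    rw [hcomm A hA x]
  obtain ⟨hdom, heq⟩ := haff U hUunit hUcomm ⟨ξ, hξ⟩
  -- η ∈ K, so U η = η
  have hηK : η ∈ K := by
    refine K₀.le_topologicalClosure ?_
    exact ⟨1, one_mem R.toStarSubalgebra, ContinuousLinearMap.one_apply η⟩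
  have hUη : U η = η := by rw [hUapp, hPid _ hηK]; abel
  -- T (ξ - U ξ) = 0, hence ξ = U ξ
  have hz : T ((⟨ξ, hξ⟩ : T.domain) - ⟨U ξ, hdom⟩) = 0 := by
    rw [T.map_sub, heq]
    show η - U η = 0
    rw [hUη, sub_self]
  have hzero : ((⟨ξ, hξ⟩ : T.domain) - ⟨U ξ, hdom⟩ : T.domain).1 = 0 := hinj _ hz
  have hUξ : U ξ = ξ := by
    have h : ξ - U ξ = 0 := hzero
    exact (sub_eq_zero.mp h).symm
  have hPξ : P ξ = ξ := by
    have h2 : P ξ + P ξ - ξ = ξ := by rw [← hUapp]; exact hUξ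
    have h3 : (2 : ℂ) • P ξ = (2 : ℂ) • ξ := by
      rw [two_smul, two_smul, sub_eq_iff_eq_add.mp h2]
    exact smul_right_injective H two_ne_zero h3
  have hξK : ξ ∈ K := by rw [← hPξ]; exact hPmem ξ
  have hsub : {y : H | ∃ A ∈ R, A ξ = y} ⊆ (K : Set H) := by
    rintro y ⟨A, hA, rfl⟩
    exact hmapK A hA ξ hξK
  have hKuniv : (K : Set H) = Set.univ :=
    Set.eq_univ_of_univ_subset (by rw [← hcyc.closure_eq]; exact closure_minimal hsub hKclosed)
  rw [dense_iff_closure_eq]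
  calc closure {y : H | ∃ A ∈ R, A η = y} = closure (K₀ : Set H) := rfl
    _ = (K : Set H) := (K₀.topologicalClosure_coe)
    _ = Set.univ := hKuniv
end
end

section
/- Let 𝔄 be a C*-algebra with state ω and GNS triple (H_ω, π_ω, ξ_ω), and let H₀ be a positive self-adjoint operator on H_ω with ξ_ω ∈ D(H₀^{1/2}) such that ⟨H₀^{1/2} π_ω(a*a) H₀^{1/2} ξ_ω, ξ_ω⟩ (interpreted via spectral projections as lim_n ⟨H₀ E_n π_ω(a*a) ξ_ω, ξ_ω⟩) equals ψ(a*a) for a second state ψ on 𝔄, for all a ∈ 𝔄. Then the map W₀ : π_ψ(a)ξ_ψ ↦ π_ω(a) H₀^{1/2} ξ_ω is well-defined and extends to a linear isometry W : H_ψ → H_ω satisfying W π_ψ(a) = π_ω(a) W for all a ∈ 𝔄. -/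
open scoped ComplexOrder

noncomputable section

/-- A state on a unital complex *-algebra: a linear, unital, positive functional. -/
def IsState {A : Type*} [Ring A] [StarRing A] [Algebra ℂ A] (ω : A → ℂ) : Prop :=
  (∀ a b, ω (a + b) = ω a + ω b) ∧ (∀ (c : ℂ) (a : A), ω (c • a) = c * ω a) ∧
  ω 1 = 1 ∧ ∀ a, 0 ≤ ω (star a * a)

/-- A GNS triple for the functional `ω`: a *-representation `π` of `A` on a Hilbert space
with a cyclic vector `ξ` such that `ω a = ⟨π(a) ξ, ξ⟩`.  Any such triple is unitarily
equivalent to the GNS representation of `ω`. -/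
structure GNSTriple (A : Type*) [Ring A] [StarRing A] [Algebra ℂ A] [StarModule ℂ A]
    (ω : A → ℂ) where
  space : Type
  [nacg : NormedAddCommGroup space]
  [ips : InnerProductSpace ℂ space]
  [cpl : CompleteSpace space]
  π : A →⋆ₐ[ℂ] (space →L[ℂ] space)
  ξ : space
  cyclic : Dense {y : space | ∃ a : A, π a ξ = y}
  repr : ∀ a : A, ω a = (inner ℂ (π a ξ) ξ : ℂ)

attribute [instance] GNSTriple.nacg GNSTriple.ips GNSTriple.cpl

/-- Unitary equivalence of two GNS representations. -/
def GNSTriple.UEquiv {A : Type*} [Ring A] [StarRing A] [Algebra ℂ A] [StarModule ℂ A]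
    {ω ψ : A → ℂ} (P : GNSTriple A ω) (Q : GNSTriple A ψ) : Prop :=
  ∃ W : P.space ≃ₗᵢ[ℂ] Q.space, ∀ (a : A) (x : P.space), W (P.π a x) = Q.π a (W x)

/-- Let `ω`, `ψ` be states on a C*-algebra `𝔄` with GNS triples `P`
(for `ω`) and `Q` (for `ψ`), and let `K = H₀^{1/2}` be a positive self-adjoint operator on
`H_ω` with `ξ_ω ∈ D(K)` such that `⟨π_ω(a* a) K ξ_ω, K ξ_ω⟩ = ψ(a* a)` for all `a`.  Then
`W₀ : π_ψ(a) ξ_ψ ↦ π_ω(a) K ξ_ω` is well defined and extends to a linear isometry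
`W : H_ψ → H_ω` intertwining `π_ψ` and `π_ω`. -/
theorem isometry_from_radonNikodym_sqrt
    {A : Type*} [Ring A] [StarRing A] [Algebra ℂ A] [StarModule ℂ A]
    (ω ψ : A → ℂ) (hω : IsState ω) (hψ : IsState ψ)
    (P : GNSTriple A ω) (Q : GNSTriple A ψ)
    (K : P.space →ₗ.[ℂ] P.space) (hKsa : IsSelfAdjoint K)
    (hKpos : ∀ x : K.domain, 0 ≤ (inner ℂ (x : P.space) (K x) : ℂ))
    (hξ : P.ξ ∈ K.domain)
    (hkey : ∀ a : A,
      ψ (star a * a) = (inner ℂ (P.π (star a * a) (K ⟨P.ξ, hξ⟩)) (K ⟨P.ξ, hξ⟩) : ℂ)) :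
    ∃ W : Q.space →ₗᵢ[ℂ] P.space,
      (∀ a : A, W (Q.π a Q.ξ) = P.π a (K ⟨P.ξ, hξ⟩)) ∧
      ∀ (a : A) (x : Q.space), W (Q.π a x) = P.π a (W x) := by
  classical
  set η : P.space := K ⟨P.ξ, hξ⟩ with hη
  -- the two "orbit" linear maps
  let f : A →ₗ[ℂ] Q.space :=
    { toFun := fun a => Q.π a Q.ξ
      map_add' := fun a b => by simp [map_add, ContinuousLinearMap.add_apply]
      map_smul' := fun c a => by simp [map_smul] }
  let g : A →ₗ[ℂ] P.space :=
    { toFun := fun a => P.π a η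
      map_add' := fun a b => by simp [map_add, ContinuousLinearMap.add_apply]
      map_smul' := fun c a => by simp [map_smul] }
  -- key identity: ⟨π(a*a) v, v⟩ = ‖π(a) v‖²
  have hsq : ∀ {B : Type} [NormedAddCommGroup B] [InnerProductSpace ℂ B] [CompleteSpace B]
      (ρ : A →⋆ₐ[ℂ] (B →L[ℂ] B)) (a : A) (v : B),
      (inner ℂ (ρ (star a * a) v) v : ℂ) = (‖ρ a v‖ : ℂ) ^ 2 := by
    intro B _ _ _ ρ a v
    rw [map_mul, map_star, ContinuousLinearMap.mul_apply, ContinuousLinearMap.star_eq_adjoint,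
      ContinuousLinearMap.adjoint_inner_left, inner_self_eq_norm_sq_to_K]
    rfl
  have hnorm : ∀ a : A, ‖g a‖ = ‖f a‖ := by
    intro a
    have h1 : (‖g a‖ : ℂ) ^ 2 = (‖f a‖ : ℂ) ^ 2 := by
      show (‖P.π a η‖ : ℂ) ^ 2 = (‖Q.π a Q.ξ‖ : ℂ) ^ 2
      rw [← hsq P.π a η, ← hsq Q.π a Q.ξ, ← hkey a, ← Q.repr (star a * a)]
    have h2 : ‖g a‖ ^ 2 = ‖f a‖ ^ 2 := by exact_mod_cast h1
    nlinarith [norm_nonneg (g a), norm_nonneg (f a)]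
  have hle : LinearMap.ker f ≤ LinearMap.ker g := by
    intro a ha
    rw [LinearMap.mem_ker] at ha ⊢
    rw [← norm_eq_zero, hnorm, ha, norm_zero]
  -- factor g through the range of f
  let S := LinearMap.range f
  let h : S →ₗ[ℂ] P.space :=
    ((LinearMap.ker f).liftQ g hle).comp f.quotKerEquivRange.symm.toLinearMap
  have h_fact : ∀ a : A, h ⟨f a, LinearMap.mem_range_self f a⟩ = g a := by
    intro a
    have : f.quotKerEquivRange.symm ⟨f a, LinearMap.mem_range_self f a⟩ =
        Submodule.Quotient.mk a := by
      apply f.quotKerEquivRange.injective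
      simp [LinearMap.quotKerEquivRange_apply_mk]
    simp only [h, LinearMap.comp_apply, LinearEquiv.coe_toLinearMap, this,
      Submodule.liftQ_apply]
  have h_isom : ∀ x : S, ‖h x‖ = ‖x‖ := by
    rintro ⟨x, a, rfl⟩
    rw [h_fact a, hnorm a]
    rfl
  let hc : S →L[ℂ] P.space := h.mkContinuous 1 fun x => by rw [h_isom]; simp
  have hc_eq : ∀ x : S, hc x = h x := fun x => rfl
  let e : S →L[ℂ] Q.space := S.subtypeL
  have h_e : IsUniformInducing e := isUniformEmbedding_subtype_val.isUniformInducing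
  have h_dense : DenseRange e := by
    have : Set.range (e : S → Q.space) = {y : Q.space | ∃ a : A, Q.π a Q.ξ = y} := by
      ext y
      constructor
      · rintro ⟨⟨x, a, rfl⟩, rfl⟩; exact ⟨a, rfl⟩
      · rintro ⟨a, rfl⟩; exact ⟨⟨f a, LinearMap.mem_range_self f a⟩, rfl⟩
    rw [DenseRange, this]
    exact Q.cyclic
  let W' : Q.space →L[ℂ] P.space := hc.extend e
  have hW'f : ∀ a : A, W' (Q.π a Q.ξ) = P.π a η := by
    intro a
    have : Q.π a Q.ξ = e ⟨f a, LinearMap.mem_range_self f a⟩ := rfl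
    rw [this, ContinuousLinearMap.extend_eq _ h_dense h_e, hc_eq, h_fact]
    rfl
  have hWnorm : ∀ x : Q.space, ‖W' x‖ = ‖x‖ := by
    intro x
    refine h_dense.induction_on x ?_ ?_
    · exact isClosed_eq (W'.continuous.norm) continuous_norm
    · rintro ⟨x, a, rfl⟩
      show ‖W' (Q.π a Q.ξ)‖ = _
      rw [hW'f a]
      exact (hnorm a).trans rfl
  refine ⟨⟨W'.toLinearMap, hWnorm⟩, hW'f, ?_⟩
  intro a x
  refine h_dense.induction_on x ?_ ?_
  · exact isClosed_eq (W'.continuous.comp (Q.π a).continuous)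
      ((P.π a).continuous.comp W'.continuous)
  · rintro ⟨x, b, rfl⟩
    show W' (Q.π a (Q.π b Q.ξ)) = P.π a (W' (Q.π b Q.ξ))
    rw [hW'f b, ← ContinuousLinearMap.mul_apply, ← map_mul, hW'f (a * b),
      ← ContinuousLinearMap.mul_apply, ← map_mul]
end
end
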